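/- arXiv:1006.4955 — 2 statements merged into one kernel-verified Lean document; each statement's English description precedes it below -/
import Mathlib

section
/- Let R and S be term rewriting systems over a signature Σ and let T be a set of ground terms over Σ. Then R is terminating relative to S on T (i.e., SN_T(R/S) holds) if and only if there exists an extended well-founded monotone partial Σ-algebra (A,[[·]],≻,⊒) such that T is defined, ≻ is a partial model for R, and ⊒ is a partial model for S. -/
namespace LocalTerm

/-- Terms over a signature `F` with arities `ar` and variables `X`. -/
inductive Tm (F : Type) (ar : F → ℕ) (X : Type) : Type
  | var : X → Tm F ar X
  | app : (f : F) → (Fin (ar f) → Tm F ar X) → Tm F ar X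

/-- Substitution. -/
def subst {F : Type} {ar : F → ℕ} {X Y : Type} (σ : X → Tm F ar Y) :
    Tm F ar X → Tm F ar Y
  | .var x => σ x
  | .app f ts => .app f fun i => subst σ (ts i)

/-- One-step rewrite relation of a set `R` of rules (over variables `X`),
acting on terms over variables `V`: a rule instance inside a one-hole context. -/
inductive Rw {F : Type} {ar : F → ℕ} {X V : Type}
    (R : Set (Tm F ar X × Tm F ar X)) : Tm F ar V → Tm F ar V → Prop
  | rule {l r : Tm F ar X} (h : (l, r) ∈ R) (σ : X → Tm F ar V) :
      Rw R (subst σ l) (subst σ r)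
  | ctxt {f : F} {ts : Fin (ar f) → Tm F ar V} (i : Fin (ar f)) {t' : Tm F ar V} :
      Rw R (ts i) t' → Rw R (Tm.app f ts) (Tm.app f (Function.update ts i t'))

/-- The set of variables of a term. -/
def Vars {F : Type} {ar : F → ℕ} {X : Type} : Tm F ar X → Set X
  | .var x => {x}
  | .app _ ts => ⋃ i, Vars (ts i)

/-- `R` is a TRS: no left-hand side is a variable,
and all variables of a right-hand side occur in the left-hand side. -/
def IsTRS {F : Type} {ar : F → ℕ} {X : Type}
    (R : Set (Tm F ar X × Tm F ar X)) : Prop :=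
  ∀ p ∈ R, (∀ x : X, p.1 ≠ Tm.var x) ∧ Vars p.2 ⊆ Vars p.1

/-- A partial interpretation of the function symbols in a set `A`:
for every `n`-ary symbol a partial function `Aⁿ ⇀ A`. -/
abbrev Interp (F : Type) (ar : F → ℕ) (A : Type) : Type :=
  ∀ f : F, (Fin (ar f) → A) → Option A

/-- `Eval I α t a` : the (partial) interpretation of `t` under assignment `α`
is defined and equal to `a`. -/
inductive Eval {F : Type} {ar : F → ℕ} {X A : Type}
    (I : Interp F ar A) (α : X → A) : Tm F ar X → A → Prop
  | var (x : X) : Eval I α (Tm.var x) (α x)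
  | app {f : F} {ts : Fin (ar f) → Tm F ar X} (as : Fin (ar f) → A) {a : A}
      (hts : ∀ i, Eval I α (ts i) (as i)) (hI : I f as = some a) :
      Eval I α (Tm.app f ts) a

/-- A set `T` of ground terms is defined if the interpretation of
every `t ∈ T` is defined. -/
def DefinedOn {F : Type} {ar : F → ℕ} {A : Type}
    (I : Interp F ar A) (T : Set (Tm F ar Empty)) : Prop :=
  ∀ t ∈ T, ∃ a : A, Eval I Empty.elim t a

/-- `succ` is a partial model for `R`: whenever the interpretation of a
left-hand side is defined, the right-hand side is defined as well and the
interpretations are related by `succ`. -/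
def PartialModel {F : Type} {ar : F → ℕ} {X A : Type}
    (I : Interp F ar A) (succ : A → A → Prop)
    (R : Set (Tm F ar X × Tm F ar X)) : Prop :=
  ∀ p ∈ R, ∀ (α : X → A) (a : A), Eval I α p.1 a →
    ∃ b : A, Eval I α p.2 b ∧ succ a b

/-- A partial function is closed w.r.t. a relation. -/
def ClosedFn {A : Type} {n : ℕ} (g : (Fin n → A) → Option A)
    (r : A → A → Prop) : Prop :=
  ∀ (v : Fin n → A) (i : Fin n) (b : A), r (v i) b → (g v).isSome →
    (g (Function.update v i b)).isSome

/-- A partial function is monotone w.r.t. a relation. -/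
def MonoFn {A : Type} {n : ℕ} (g : (Fin n → A) → Option A)
    (r : A → A → Prop) : Prop :=
  ∀ (v : Fin n → A) (i : Fin n) (b : A) (x y : A), r (v i) b →
    g v = some x → g (Function.update v i b) = some y → r x y

/-- `(A, I, r)` is a monotone partial algebra: every interpretation is
closed and monotone with respect to `r`. -/
def MonoAlg {F : Type} {ar : F → ℕ} {A : Type}
    (I : Interp F ar A) (r : A → A → Prop) : Prop :=
  ∀ f : F, ClosedFn (I f) r ∧ MonoFn (I f) r

/-- Well-foundedness: no infinite descending sequence. -/
def WFrel {A : Type} (r : A → A → Prop) : Prop :=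
  ¬ ∃ f : ℕ → A, ∀ n : ℕ, r (f n) (f (n + 1))

/-- `r` is terminating on `T`: no element of `T` starts an infinite `r`-sequence. -/
def SNon {B : Type} (r : B → B → Prop) (T : Set B) : Prop :=
  ∀ t ∈ T, ¬ ∃ f : ℕ → B, f 0 = t ∧ ∀ n : ℕ, r (f n) (f (n + 1))

/-- Relative termination on `T`: no element of `T` starts an infinite
`(r ∪ s)`-sequence containing infinitely many `r`-steps. -/
def SNrelOn {B : Type} (r s : B → B → Prop) (T : Set B) : Prop :=
  ∀ t ∈ T, ¬ ∃ f : ℕ → B, f 0 = t ∧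
    (∀ n : ℕ, r (f n) (f (n + 1)) ∨ s (f n) (f (n + 1))) ∧
    (∀ m : ℕ, ∃ n : ℕ, m ≤ n ∧ r (f n) (f (n + 1)))

/-- Relative termination (on everything). -/
def SNrel {B : Type} (r s : B → B → Prop) : Prop := SNrelOn r s Set.univ


section Soundness

variable {F : Type} {ar : F → ℕ}

theorem eval_unique {X A : Type} {I : Interp F ar A} {α : X → A}
    {t : Tm F ar X} {a : A} (h1 : Eval I α t a) :
    ∀ b, Eval I α t b → a = b := by
  induction h1 with
  | var x => intro b h2; cases h2; rfl
  | app as hts hI ih =>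
    intro b h2
    cases h2 with
    | app as' hts' hI' =>
      have has : as = as' := funext fun i => ih i (as' i) (hts' i)
      rw [← has] at hI'
      rw [hI] at hI'
      exact Option.some.inj hI'

theorem eval_subst_exists {X V A : Type} {I : Interp F ar A} {γ : V → A}
    {σ : X → Tm F ar V} :
    ∀ (t : Tm F ar X) (a : A), Eval I γ (subst σ t) a →
      ∀ x ∈ Vars t, ∃ b, Eval I γ (σ x) b := by
  intro t
  induction t with
  | var y =>
    intro a h x hx
    simp only [Vars, Set.mem_singleton_iff] at hx
    subst hx
    exact ⟨a, h⟩
  | app g ts ih =>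
    intro a h x hx
    simp only [Vars, Set.mem_iUnion] at hx
    obtain ⟨i, hi⟩ := hx
    simp only [subst] at h
    cases h with
    | app as hts hI => exact ih i (as i) (hts i) x hi

theorem eval_subst_of {X V A : Type} {I : Interp F ar A} {γ : V → A}
    {σ : X → Tm F ar V} {β : X → A} :
    ∀ (t : Tm F ar X) (a : A), (∀ x ∈ Vars t, Eval I γ (σ x) (β x)) →
      Eval I β t a → Eval I γ (subst σ t) a := by
  intro t
  induction t with
  | var y =>
    intro a hβ h
    cases h
    exact hβ y (by simp [Vars])
  | app g ts ih =>
    intro a hβ h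
    cases h with
    | app as hts hI =>
      simp only [subst]
      exact Eval.app as
        (fun i => ih i (as i)
          (fun x hx => hβ x (by simp only [Vars, Set.mem_iUnion]; exact ⟨i, hx⟩))
          (hts i)) hI

theorem eval_of_subst {X V A : Type} {I : Interp F ar A} {γ : V → A}
    {σ : X → Tm F ar V} {β : X → A} :
    ∀ (t : Tm F ar X) (a : A), (∀ x ∈ Vars t, Eval I γ (σ x) (β x)) →
      Eval I γ (subst σ t) a → Eval I β t a := by
  intro t
  induction t with
  | var y =>
    intro a hβ h
    have hab := eval_unique h (β y) (hβ y (by simp [Vars]))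
    rw [hab]
    exact Eval.var y
  | app g ts ih =>
    intro a hβ h
    simp only [subst] at h
    cases h with
    | app as hts hI =>
      exact Eval.app as
        (fun i => ih i (as i)
          (fun x hx => hβ x (by simp only [Vars, Set.mem_iUnion]; exact ⟨i, hx⟩))
          (hts i)) hI

theorem step_sound {X A : Type} [Nonempty A] {I : Interp F ar A}
    {succ : A → A → Prop} {Q : Set (Tm F ar X × Tm F ar X)}
    (hQ : IsTRS Q) (hM : MonoAlg I succ) (hPM : PartialModel I succ Q) :
    ∀ {s u : Tm F ar Empty}, Rw Q s u → ∀ a, Eval I Empty.elim s a →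
      ∃ b, Eval I Empty.elim u b ∧ succ a b := by
  intro s u h
  induction h with
  | @rule l r hmem σ =>
    intro a ha
    classical
    set β : X → A := fun x =>
      if h : ∃ b, Eval I Empty.elim (σ x) b then h.choose
      else Classical.arbitrary A with hβdef
    have hβl : ∀ x ∈ Vars l, Eval I Empty.elim (σ x) (β x) := by
      intro x hx
      have hex : ∃ b, Eval I Empty.elim (σ x) b := eval_subst_exists l a ha x hx
      simp only [hβdef, dif_pos hex]
      exact hex.choose_spec
    have hl : Eval I β l a := eval_of_subst l a hβl ha
    obtain ⟨c, hc, hsucc⟩ := hPM (l, r) hmem β a hl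
    exact ⟨c, eval_subst_of r c (fun x hx => hβl x ((hQ (l, r) hmem).2 hx)) hc, hsucc⟩
  | @ctxt g ts i t' hrw ih =>
    intro a ha
    cases ha with
    | app as hts hI =>
      obtain ⟨b, hb, hsb⟩ := ih (as i) (hts i)
      have hclosed : (I g (Function.update as i b)).isSome :=
        (hM g).1 as i b hsb (by rw [hI]; rfl)
      obtain ⟨a', ha'⟩ := Option.isSome_iff_exists.1 hclosed
      have hmono : succ a a' := (hM g).2 as i b a a' hsb hI ha'
      refine ⟨a', Eval.app (Function.update as i b) ?_ ha', hmono⟩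
      intro j
      rcases eq_or_ne j i with rfl | hne
      · simpa using hb
      · simpa [Function.update_of_ne hne] using hts j

end Soundness

section Completeness

variable {F : Type} {ar : F → ℕ} {X : Type}

/-- Closure of `T` under rewriting and immediate subterms. -/
inductive Cl (R S : Set (Tm F ar X × Tm F ar X)) (T : Set (Tm F ar Empty)) :
    Tm F ar Empty → Prop
  | base {t} : t ∈ T → Cl R S T t
  | rewR {t u} : Cl R S T t → Rw R t u → Cl R S T u
  | rewS {t u} : Cl R S T t → Rw S t u → Cl R S T u
  | sub {f ts} (i : Fin (ar f)) : Cl R S T (Tm.app f ts) → Cl R S T (ts i)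

theorem rw_update {V : Type} {Q : Set (Tm F ar X × Tm F ar X)} {g : F}
    {ts : Fin (ar g) → Tm F ar V} (i : Fin (ar g)) {u v : Tm F ar V}
    (h : Rw Q u v) :
    Rw Q (Tm.app g (Function.update ts i u)) (Tm.app g (Function.update ts i v)) := by
  have h2 := Rw.ctxt (R := Q) (ts := Function.update ts i u) i (t' := v)
    (by rw [Function.update_self]; exact h)
  rwa [Function.update_idem] at h2

theorem cl_good {R S : Set (Tm F ar X × Tm F ar X)} {T : Set (Tm F ar Empty)}
    (h : SNrelOn (Rw R) (Rw S) T) :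
    ∀ t, Cl R S T t → ¬ ∃ g : ℕ → Tm F ar Empty, g 0 = t ∧
      (∀ n, Rw R (g n) (g (n + 1)) ∨ Rw S (g n) (g (n + 1))) ∧
      (∀ m, ∃ n, m ≤ n ∧ Rw R (g n) (g (n + 1))) := by
  intro t ht
  induction ht with
  | base hmem => exact h _ hmem
  | @rewR t u hc hrw ih =>
    rintro ⟨g, hg0, hstep, hinf⟩
    apply ih
    refine ⟨fun n => match n with | 0 => t | k + 1 => g k, rfl, ?_, ?_⟩
    · intro n
      match n with
      | 0 => show Rw R t (g 0) ∨ Rw S t (g 0); rw [hg0]; exact Or.inl hrw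
      | k + 1 => exact hstep k
    · intro m
      obtain ⟨n, hn, hr⟩ := hinf m
      exact ⟨n + 1, hn.trans (Nat.le_succ n), hr⟩
  | @rewS t u hc hrw ih =>
    rintro ⟨g, hg0, hstep, hinf⟩
    apply ih
    refine ⟨fun n => match n with | 0 => t | k + 1 => g k, rfl, ?_, ?_⟩
    · intro n
      match n with
      | 0 => show Rw R t (g 0) ∨ Rw S t (g 0); rw [hg0]; exact Or.inr hrw
      | k + 1 => exact hstep k
    · intro m
      obtain ⟨n, hn, hr⟩ := hinf m
      exact ⟨n + 1, hn.trans (Nat.le_succ n), hr⟩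
  | @sub f0 ts i hc ih =>
    rintro ⟨g, hg0, hstep, hinf⟩
    apply ih
    refine ⟨fun n => Tm.app f0 (Function.update ts i (g n)), ?_, ?_, ?_⟩
    · show Tm.app f0 (Function.update ts i (g 0)) = Tm.app f0 ts
      rw [hg0, Function.update_eq_self]
    · intro n
      rcases hstep n with h1 | h1
      · exact Or.inl (rw_update i h1)
      · exact Or.inr (rw_update i h1)
    · intro m
      obtain ⟨n, hn, hr⟩ := hinf m
      exact ⟨n, hn, rw_update i hr⟩

open Classical in
/-- The term interpretation restricted to the closure `Cl R S T`. -/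
noncomputable def clInterp (R S : Set (Tm F ar X × Tm F ar X))
    (T : Set (Tm F ar Empty)) : Interp F ar (Tm F ar Empty) :=
  fun f as => if Cl R S T (Tm.app f as) then some (Tm.app f as) else none

variable {R S : Set (Tm F ar X × Tm F ar X)} {T : Set (Tm F ar Empty)}

theorem eval_subst_self {Y : Type} (α : Y → Tm F ar Empty) :
    ∀ t : Tm F ar Y, Cl R S T (subst α t) →
      Eval (clInterp R S T) α t (subst α t) := by
  intro t
  induction t with
  | var x => intro _; exact Eval.var x
  | app g ts ih =>
    intro hcl
    simp only [subst] at hcl ⊢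
    refine Eval.app (fun i => subst α (ts i)) (fun i => ih i (Cl.sub i hcl)) ?_
    simp only [clInterp]
    rw [if_pos hcl]

theorem eval_to_subst {Y : Type} {α : Y → Tm F ar Empty} :
    ∀ {t : Tm F ar Y} {a}, Eval (clInterp R S T) α t a → a = subst α t := by
  intro t a h
  induction h with
  | var x => rfl
  | @app g ts as a hts hI ih =>
    simp only [clInterp] at hI
    split at hI
    · have ha : a = Tm.app g as := (Option.some.inj hI).symm
      rw [ha]
      simp only [subst]
      congr 1
      funext i
      exact ih i
    · cases hI

theorem eval_cl {Y : Type} {α : Y → Tm F ar Empty} {t : Tm F ar Y} {a}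
    (h : Eval (clInterp R S T) α t a) (hnv : ∀ x, t ≠ Tm.var x) :
    Cl R S T a := by
  cases h with
  | var x => exact absurd rfl (hnv x)
  | app as hts hI =>
    simp only [clInterp] at hI
    split at hI
    next hcl => exact (Option.some.inj hI) ▸ hcl
    next => cases hI

theorem subst_elim : ∀ t : Tm F ar Empty, subst (Empty.elim) t = t := by
  intro t
  induction t with
  | var x => exact x.elim
  | app g ts ih =>
    simp only [subst]
    congr 1
    funext i
    exact ih i

end Completeness


/-- `R` is terminating relative to `S` on a set `T` of ground
terms iff there exists an extended well-founded monotone partial Σ-algebra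
`(A, I, succ, sq)` such that `T` is defined, `succ` is a partial model for `R`
and `sq` is a partial model for `S`. -/
theorem local_relative_termination_iff_extended_wf_monotone_partial_algebra
    {F X : Type} {ar : F → ℕ}
    (R S : Set (Tm F ar X × Tm F ar X)) (hR : IsTRS R) (hS : IsTRS S)
    (T : Set (Tm F ar Empty)) :
    SNrelOn (Rw R) (Rw S) T ↔
      ∃ (A : Type) (_ : Nonempty A) (I : Interp F ar A)
        (succ sq : A → A → Prop),
        MonoAlg I succ ∧ MonoAlg I sq ∧ SNrel succ sq ∧
        DefinedOn I T ∧ PartialModel I succ R ∧ PartialModel I sq S := by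
  constructor
  · -- completeness: build the term algebra on the closure of T
    intro hSN
    by_cases hT : T.Nonempty
    · obtain ⟨t0, ht0⟩ := hT
      refine ⟨Tm F ar Empty, ⟨t0⟩, clInterp R S T,
        (fun a b => Cl R S T a ∧ Rw R a b), (fun a b => Cl R S T a ∧ Rw S a b),
        ?_, ?_, ?_, ?_, ?_, ?_⟩
      · -- MonoAlg succ
        intro g
        constructor
        · intro v i b hrb hsome
          have hcl : Cl R S T (Tm.app g v) := by
            simp only [clInterp] at hsome
            split at hsome
            · assumption
            · simp at hsome
          have hcl2 : Cl R S T (Tm.app g (Function.update v i b)) :=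
            Cl.rewR hcl (Rw.ctxt i hrb.2)
          simp only [clInterp]
          rw [if_pos hcl2]
          rfl
        · intro v i b x y hrb hx hy
          simp only [clInterp] at hx hy
          split at hx
          next hcl =>
            split at hy
            next hcl2 =>
              have hxe := Option.some.inj hx
              have hye := Option.some.inj hy
              rw [← hxe, ← hye]
              exact ⟨hcl, Rw.ctxt i hrb.2⟩
            next => cases hy
          next => cases hx
      · -- MonoAlg sq
        intro g
        constructor
        · intro v i b hrb hsome
          have hcl : Cl R S T (Tm.app g v) := by
            simp only [clInterp] at hsome
            split at hsome
            · assumption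
            · simp at hsome
          have hcl2 : Cl R S T (Tm.app g (Function.update v i b)) :=
            Cl.rewS hcl (Rw.ctxt i hrb.2)
          simp only [clInterp]
          rw [if_pos hcl2]
          rfl
        · intro v i b x y hrb hx hy
          simp only [clInterp] at hx hy
          split at hx
          next hcl =>
            split at hy
            next hcl2 =>
              have hxe := Option.some.inj hx
              have hye := Option.some.inj hy
              rw [← hxe, ← hye]
              exact ⟨hcl, Rw.ctxt i hrb.2⟩
            next => cases hy
          next => cases hx
      · -- SNrel
        intro t _
        rintro ⟨g, hg0, hstep, hinf⟩
        have hcl0 : Cl R S T (g 0) := by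
          rcases hstep 0 with ⟨h1, -⟩ | ⟨h1, -⟩ <;> exact h1
        exact cl_good hSN (g 0) hcl0
          ⟨g, rfl, fun n => (hstep n).imp And.right And.right,
            fun m => (hinf m).imp fun n hn => ⟨hn.1, hn.2.2⟩⟩
      · -- DefinedOn
        intro t ht
        have hcl : Cl R S T (subst Empty.elim t) := by
          rw [subst_elim]; exact Cl.base ht
        have h2 := eval_subst_self Empty.elim t hcl
        rw [subst_elim] at h2
        exact ⟨t, h2⟩
      · -- PartialModel succ R
        rintro ⟨l, r⟩ hp α a hev
        have hnv := (hR (l, r) hp).1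
        have hcla : Cl R S T a := eval_cl hev hnv
        have ha : a = subst α l := eval_to_subst hev
        have hrw : Rw R a (subst α r) := by rw [ha]; exact Rw.rule hp α
        exact ⟨subst α r, eval_subst_self α r (Cl.rewR hcla hrw), hcla, hrw⟩
      · -- PartialModel sq S
        rintro ⟨l, r⟩ hp α a hev
        have hnv := (hS (l, r) hp).1
        have hcla : Cl R S T a := eval_cl hev hnv
        have ha : a = subst α l := eval_to_subst hev
        have hrw : Rw S a (subst α r) := by rw [ha]; exact Rw.rule hp α
        exact ⟨subst α r, eval_subst_self α r (Cl.rewS hcla hrw), hcla, hrw⟩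
    · -- T is empty: trivial algebra
      refine ⟨Unit, ⟨()⟩, fun _ _ => none,
        (fun _ _ => False), (fun _ _ => False), ?_, ?_, ?_, ?_, ?_, ?_⟩
      · exact fun g => ⟨fun v i b hf => hf.elim, fun v i b x y hf => hf.elim⟩
      · exact fun g => ⟨fun v i b hf => hf.elim, fun v i b x y hf => hf.elim⟩
      · rintro t - ⟨g, -, hstep, -⟩
        rcases hstep 0 with h | h <;> exact h
      · intro t ht
        exact absurd ⟨t, ht⟩ hT
      · rintro ⟨l, r⟩ hp α a hev
        exfalso
        cases hev with
        | var x => exact (hR _ hp).1 x rfl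
        | app as hts hI => cases hI
      · rintro ⟨l, r⟩ hp α a hev
        exfalso
        cases hev with
        | var x => exact (hS _ hp).1 x rfl
        | app as hts hI => cases hI
  · -- soundness
    rintro ⟨A, hNe, I, succ, sq, hMs, hMq, hWF, hDef, hPR, hPS⟩
    haveI := hNe
    intro t ht
    rintro ⟨g, hg0, hstep, hinf⟩
    have hall : ∀ n, ∃ a, Eval I Empty.elim (g n) a := by
      intro n
      induction n with
      | zero => rw [hg0]; exact hDef t ht
      | succ k ihk =>
        obtain ⟨a, ha⟩ := ihk
        rcases hstep k with h | h
        · obtain ⟨b, hb, -⟩ := step_sound hR hMs hPR h a ha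
          exact ⟨b, hb⟩
        · obtain ⟨b, hb, -⟩ := step_sound hS hMq hPS h a ha
          exact ⟨b, hb⟩
    choose v hv using hall
    refine hWF (v 0) (Set.mem_univ _) ⟨v, rfl, ?_, ?_⟩
    · intro n
      rcases hstep n with h | h
      · obtain ⟨b, hb, hs⟩ := step_sound hR hMs hPR h (v n) (hv n)
        exact Or.inl ((eval_unique hb (v (n + 1)) (hv (n + 1))) ▸ hs)
      · obtain ⟨b, hb, hs⟩ := step_sound hS hMq hPS h (v n) (hv n)
        exact Or.inr ((eval_unique hb (v (n + 1)) (hv (n + 1))) ▸ hs)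
    · intro m
      obtain ⟨n, hn, h⟩ := hinf m
      obtain ⟨b, hb, hs⟩ := step_sound hR hMs hPR h (v n) (hv n)
      exact ⟨n, hn, (eval_unique hb (v (n + 1)) (hv (n + 1))) ▸ hs⟩

end LocalTerm
end

section
/- Let R be a non-collapsing TRS over a signature Σ (no rule of R has a variable as its right-hand side) and let A = (A,[[·]]) be a core partial model for R. Then R is terminating on L(A) = {t ground : [[t]] defined} if and only if the labelled TRS lab_A(R) over the labelled signature Σ_lab is terminating on all terms over Σ_lab. -/
namespace LocalTerm

/-- The labelled signature: symbols `f` together with a tuple of labels `λ`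
such that `I f λ` is defined. -/
def FlabT {F : Type} {ar : F → ℕ} {A : Type} (I : Interp F ar A) : Type :=
  {p : Σ f : F, Fin (ar f) → A // (I p.1 p.2).isSome}

/-- Arity of labelled symbols. -/
def arLab {F : Type} {ar : F → ℕ} {A : Type} (I : Interp F ar A) :
    FlabT I → ℕ :=
  fun p => ar p.1.1

/-- `Lab I α t t'` : `t'` is the labelling of `t` with respect to the
assignment `α` (defined whenever the interpretation of `t` is defined): each
symbol gets labelled by the tuple of the values of its arguments. -/
inductive Lab {F : Type} {ar : F → ℕ} {X A : Type}
    (I : Interp F ar A) (α : X → A) :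
    Tm F ar X → Tm (FlabT I) (arLab I) X → Prop
  | var (x : X) : Lab I α (Tm.var x) (Tm.var x)
  | app {f : F} {ts : Fin (ar f) → Tm F ar X} (as : Fin (ar f) → A)
      (h : (I f as).isSome) (ts' : Fin (ar f) → Tm (FlabT I) (arLab I) X)
      (hev : ∀ i, Eval I α (ts i) (as i))
      (hlab : ∀ i, Lab I α (ts i) (ts' i)) :
      Lab I α (Tm.app f ts) (Tm.app ⟨⟨f, as⟩, h⟩ ts')

/-- The labelled TRS `lab_A(R)`: all labellings of rules of `R` under
assignments for which the left-hand side is defined. -/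
def labTRS {F : Type} {ar : F → ℕ} {X A : Type}
    (I : Interp F ar A) (R : Set (Tm F ar X × Tm F ar X)) :
    Set (Tm (FlabT I) (arLab I) X × Tm (FlabT I) (arLab I) X) :=
  {q | ∃ p ∈ R, ∃ α : X → A, (∃ a : A, Eval I α p.1 a) ∧
        Lab I α p.1 q.1 ∧ Lab I α p.2 q.2}

/-- The core of a partial algebra: the smallest subset closed under all
defined applications of the interpretations. -/
inductive InCore {F : Type} {ar : F → ℕ} {A : Type}
    (I : Interp F ar A) : A → Prop
  | mk {f : F} (as : Fin (ar f) → A) {a : A} :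
      (∀ i, InCore I (as i)) → I f as = some a → InCore I a

section Aux

open Classical in
/-- From non-accessibility, extract an infinite forward chain. -/
lemma chain_of_not_acc {B : Type} {s : B → B → Prop} {a : B}
    (h : ¬ Acc (fun y x => s x y) a) :
    ∃ f : ℕ → B, f 0 = a ∧ ∀ n, s (f n) (f (n + 1)) := by
  have step : ∀ b : B, ¬ Acc (fun y x => s x y) b →
      ∃ c, s b c ∧ ¬ Acc (fun y x => s x y) c := by
    intro b hb
    by_contra hc
    push_neg at hc
    exact hb (Acc.intro b (fun c hsc => by_contra fun hnc => hnc (hc c hsc)))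
  let g : {b : B // ¬ Acc (fun y x => s x y) b} → {b : B // ¬ Acc (fun y x => s x y) b} :=
    fun p => ⟨Classical.choose (step p.1 p.2), (Classical.choose_spec (step p.1 p.2)).2⟩
  let F : ℕ → {b : B // ¬ Acc (fun y x => s x y) b} := fun n => g^[n] ⟨a, h⟩
  refine ⟨fun n => (F n).1, rfl, fun n => ?_⟩
  have hFn : F (n+1) = g (F n) := Function.iterate_succ_apply' g n ⟨a, h⟩
  show s (F n).1 (F (n+1)).1
  rw [hFn]
  exact (Classical.choose_spec (step (F n).1 (F n).2)).1

/-- Accessibility implies no infinite descending chain. -/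
lemma acc_no_chain {B : Type} {r : B → B → Prop} {a : B} (h : Acc r a) :
    ∀ f : ℕ → B, f 0 = a → ¬ ∀ n, r (f (n + 1)) (f n) := by
  induction h with
  | intro x hx ih =>
    intro f hf0 hstep
    exact ih (f 1) (hf0 ▸ hstep 0) (fun n => f (n+1)) rfl (fun n => hstep (n+1))

lemma update_comp {n : ℕ} {B C : Type} (h : B → C) (ts : Fin n → B) (i : Fin n) (t' : B) :
    (fun j => h (Function.update ts i t' j)) = Function.update (fun j => h (ts j)) i (h t') := by
  funext j
  by_cases hj : j = i
  · subst hj; simp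
  · simp [Function.update_of_ne hj]

lemma flatMap_congr_mem {B C : Type} (L : List B) {g h : B → List C}
    (H : ∀ x ∈ L, g x = h x) : L.flatMap g = L.flatMap h := by
  induction L with
  | nil => rfl
  | cons a L ih =>
    simp only [List.flatMap_cons]
    rw [H a (by simp), ih (fun x hx => H x (by simp [hx]))]

/-- Decompose a flatMap over `finRange` at index `i`, uniformly in functions
agreeing away from `i`. -/
lemma flatMap_decomp {n : ℕ} {C : Type} (i : Fin n) (g : Fin n → List C) :
    ∃ P S : List C, (List.finRange n).flatMap g = P ++ g i ++ S ∧
      ∀ g' : Fin n → List C, (∀ j, j ≠ i → g' j = g j) →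
        (List.finRange n).flatMap g' = P ++ g' i ++ S := by
  obtain ⟨L₁, L₂, hsplit⟩ := List.append_of_mem (List.mem_finRange i)
  have hnd := List.nodup_finRange n
  rw [hsplit] at hnd
  simp [List.nodup_append] at hnd
  have h1 : i ∉ L₁ := fun h => (hnd.2.2 i h).1 rfl
  have h2 : i ∉ L₂ := hnd.2.1.1
  refine ⟨L₁.flatMap g, L₂.flatMap g, ?_, ?_⟩
  · rw [hsplit]; simp [List.flatMap_append]
  · intro g' hg'
    have e1 : L₁.flatMap g' = L₁.flatMap g :=
      flatMap_congr_mem L₁ (fun x hx => hg' x (fun h => h1 (h ▸ hx)))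
    have e2 : L₂.flatMap g' = L₂.flatMap g :=
      flatMap_congr_mem L₂ (fun x hx => hg' x (fun h => h2 (h ▸ hx)))
    rw [hsplit]; simp [List.flatMap_append, e1, e2]

end Aux
section Basic

variable {F : Type} {ar : F → ℕ}

lemma mem_vars_app {X : Type} {x : X} {f : F} {ts : Fin (ar f) → Tm F ar X} :
    x ∈ Vars (Tm.app f ts) ↔ ∃ i, x ∈ Vars (ts i) := by
  show x ∈ ⋃ i, Vars (ts i) ↔ _
  exact Set.mem_iUnion

lemma subst_subst {X Y Z : Type} (σ : X → Tm F ar Y) (θ : Y → Tm F ar Z)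
    (t : Tm F ar X) : subst θ (subst σ t) = subst (fun x => subst θ (σ x)) t := by
  induction t with
  | var x => rfl
  | app f ts ih => show Tm.app f _ = Tm.app f _; congr 1; funext i; exact ih i

lemma rw_subst {X V W : Type} {R : Set (Tm F ar X × Tm F ar X)}
    {t t' : Tm F ar V} (h : Rw R t t') (θ : V → Tm F ar W) :
    Rw R (subst θ t) (subst θ t') := by
  induction h with
  | rule hm σ =>
    rw [subst_subst, subst_subst]
    exact Rw.rule hm _
  | ctxt i hstep ih =>
    show Rw R (Tm.app _ fun j => subst θ _) (Tm.app _ fun j => subst θ _)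
    rw [update_comp (subst θ)]
    exact Rw.ctxt i ih

variable {X A : Type} {I : Interp F ar A}

lemma eval_det {α : X → A} {t : Tm F ar X} {a b : A}
    (h1 : Eval I α t a) (h2 : Eval I α t b) : a = b := by
  induction h1 generalizing b with
  | var x => cases h2; rfl
  | app as hts hI ih =>
    cases h2 with
    | app as' hts' hI' =>
      have : as = as' := funext fun i => ih i (hts' i)
      subst this
      rw [hI] at hI'
      exact Option.some.inj hI'

lemma eval_subst {Y : Type} {α : X → A} {β : Y → A} {σ : X → Tm F ar Y}
    {t : Tm F ar X} {a : A} (h : Eval I α t a)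
    (hσ : ∀ x ∈ Vars t, Eval I β (σ x) (α x)) :
    Eval I β (subst σ t) a := by
  induction h with
  | var x => exact hσ x rfl
  | app as hts hI ih =>
    exact Eval.app as (fun i => ih i (fun x hx => hσ x (mem_vars_app.2 ⟨i, hx⟩))) hI

lemma eval_subst_vars {Y : Type} {β : Y → A} {σ : X → Tm F ar Y}
    {t : Tm F ar X} {a : A} (h : Eval I β (subst σ t) a) :
    ∀ x ∈ Vars t, ∃ b, Eval I β (σ x) b := by
  induction t generalizing a with
  | var x => exact fun y hy => by cases hy; exact ⟨a, h⟩
  | app f ts ih =>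
    cases h with
    | app as hts hI =>
      intro x hx
      obtain ⟨i, hi⟩ := mem_vars_app.1 hx
      exact ih i (hts i) x hi

lemma eval_subst_inv {Y : Type} {α : X → A} {β : Y → A} {σ : X → Tm F ar Y}
    {t : Tm F ar X} {a : A} (h : Eval I β (subst σ t) a)
    (hσ : ∀ x ∈ Vars t, Eval I β (σ x) (α x)) :
    Eval I α t a := by
  induction t generalizing a with
  | var x =>
    have := hσ x rfl
    have : a = α x := eval_det h this
    subst this; exact Eval.var x
  | app f ts ih =>
    cases h with
    | app as hts hI =>
      exact Eval.app as
        (fun i => ih i (hts i) (fun x hx => hσ x (mem_vars_app.2 ⟨i, hx⟩))) hI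

end Basic
set_option linter.unusedSectionVars false

section StepPres

variable {F : Type} {ar : F → ℕ} {X A : Type} [Nonempty A]
variable {I : Interp F ar A} {R : Set (Tm F ar X × Tm F ar X)}

open Classical in
/-- Rewriting preserves the (defined) value of a term. -/
lemma eval_step (hR : IsTRS R) (hmodel : PartialModel I (fun a b => a = b) R)
    {V : Type} {β : V → A} {t t' : Tm F ar V} (h : Rw R t t') {a : A}
    (he : Eval I β t a) : Eval I β t' a := by
  induction h generalizing a with
  | @rule l r hm σ =>
    have hvl := eval_subst_vars he
    let α : X → A := fun x =>
      if hx : ∃ b, Eval I β (σ x) b then Classical.choose hx else Classical.arbitrary A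
    have hα : ∀ x ∈ Vars l, Eval I β (σ x) (α x) := by
      intro x hx
      have hex := hvl x hx
      show Eval I β (σ x) (if hx : ∃ b, Eval I β (σ x) b then _ else _)
      rw [dif_pos hex]
      exact Classical.choose_spec hex
    have hel : Eval I α l a := eval_subst_inv he hα
    obtain ⟨b, hbr, hab⟩ := hmodel (l, r) hm α a hel
    subst hab
    exact eval_subst hbr (fun x hx => hα x ((hR (l, r) hm).2 hx))
  | ctxt i hstep ih =>
    cases he with
    | app as hts hI =>
      refine Eval.app as (fun j => ?_) hI
      by_cases hj : j = i
      · subst hj; rw [Function.update_self]; exact ih (hts j)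
      · rw [Function.update_of_ne hj]; exact hts j

lemma lab_exists {α : X → A} {t : Tm F ar X} {a : A} (h : Eval I α t a) :
    ∃ q, Lab I α t q := by
  induction h with
  | var x => exact ⟨.var x, Lab.var x⟩
  | @app f ts as a hts hI ih =>
    have hsome : (I f as).isSome := by rw [hI]; rfl
    exact ⟨.app ⟨⟨f, as⟩, hsome⟩ (fun i => Classical.choose (ih i)),
      Lab.app as hsome _ hts (fun i => Classical.choose_spec (ih i))⟩

lemma lab_det {α : X → A} {t : Tm F ar X} {q q' : Tm (FlabT I) (arLab I) X}
    (h1 : Lab I α t q) (h2 : Lab I α t q') : q = q' := by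
  induction h1 generalizing q' with
  | var x => cases h2; rfl
  | app as h ts' hev hlab ih =>
    cases h2 with
    | app as' h' ts'' hev' hlab' =>
      have has : as = as' := funext fun i => eval_det (hev i) (hev' i)
      subst has
      have : ts' = ts'' := funext fun i => ih i (hlab' i)
      subst this
      rfl

/-- Labelling commutes with substitution. -/
lemma lab_subst {Y : Type} {α : X → A} {β : Y → A} {σ : X → Tm F ar Y}
    {σ' : X → Tm (FlabT I) (arLab I) Y}
    {t : Tm F ar X} {q : Tm (FlabT I) (arLab I) X} (h : Lab I α t q)
    (hσ' : ∀ x ∈ Vars t, Lab I β (σ x) (σ' x))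
    (hα : ∀ x ∈ Vars t, Eval I β (σ x) (α x)) :
    Lab I β (subst σ t) (subst σ' q) := by
  induction h with
  | var x => exact hσ' x rfl
  | app as h ts' hev hlab ih =>
    exact Lab.app as h _
      (fun i => eval_subst (hev i) (fun x hx => hα x (mem_vars_app.2 ⟨i, hx⟩)))
      (fun i => ih i (fun x hx => hσ' x (mem_vars_app.2 ⟨i, hx⟩))
        (fun x hx => hα x (mem_vars_app.2 ⟨i, hx⟩)))

open Classical in
/-- Lifting of rewrite steps to labelled terms. -/
lemma rw_lift (hR : IsTRS R) (hmodel : PartialModel I (fun a b => a = b) R)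
    {V : Type} {β : V → A} {t t' : Tm F ar V} (h : Rw R t t') {a : A}
    (he : Eval I β t a) {q q' : Tm (FlabT I) (arLab I) V}
    (hq : Lab I β t q) (hq' : Lab I β t' q') :
    Rw (labTRS I R) q q' := by
  induction h generalizing a q q' with
  | @rule l r hm σ =>
    have hvl := eval_subst_vars he
    let α : X → A := fun x =>
      if hx : ∃ b, Eval I β (σ x) b then Classical.choose hx else Classical.arbitrary A
    have hα : ∀ x ∈ Vars l, Eval I β (σ x) (α x) := by
      intro x hx
      have hex := hvl x hx
      show Eval I β (σ x) (if hx : ∃ b, Eval I β (σ x) b then _ else _)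
      rw [dif_pos hex]
      exact Classical.choose_spec hex
    have hαr : ∀ x ∈ Vars r, Eval I β (σ x) (α x) :=
      fun x hx => hα x ((hR (l, r) hm).2 hx)
    have hel : Eval I α l a := eval_subst_inv he hα
    obtain ⟨b, hbr, hab⟩ := hmodel (l, r) hm α a hel
    subst hab
    obtain ⟨ql, hql⟩ := lab_exists hel
    obtain ⟨qr, hqr⟩ := lab_exists hbr
    let σ' : X → Tm (FlabT I) (arLab I) V := fun x =>
      if hx : ∃ qx, Lab I β (σ x) qx then Classical.choose hx else q
    have hσ' : ∀ x, (∃ b, Eval I β (σ x) b) → Lab I β (σ x) (σ' x) := by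
      intro x hx
      obtain ⟨b, hb⟩ := hx
      have hex : ∃ qx, Lab I β (σ x) qx := lab_exists hb
      show Lab I β (σ x) (if hx : ∃ qx, Lab I β (σ x) qx then _ else _)
      rw [dif_pos hex]
      exact Classical.choose_spec hex
    have hqeq : q = subst σ' ql :=
      lab_det hq (lab_subst hql (fun x hx => hσ' x ⟨α x, hα x hx⟩) hα)
    have hqeq' : q' = subst σ' qr :=
      lab_det hq' (lab_subst hqr (fun x hx => hσ' x ⟨α x, hαr x hx⟩) hαr)
    rw [hqeq, hqeq']
    have hmem : (ql, qr) ∈ labTRS I R := by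
      show ∃ p ∈ R, ∃ α : X → A, (∃ a : A, Eval I α p.1 a) ∧
        Lab I α p.1 ql ∧ Lab I α p.2 qr
      exact ⟨(l, r), hm, α, ⟨a, hel⟩, hql, hqr⟩
    exact Rw.rule hmem σ'
  | @ctxt f ts i t'' hstep ih =>
    cases he with
    | app as hts hI =>
      cases hq with
      | app as1 h1 qs1 hev1 hlab1 =>
        cases hq' with
        | app as2 h2 qs2 hev2 hlab2 =>
          have has : as2 = as1 := by
            funext j
            by_cases hj : j = i
            · subst hj
              have := hev2 j
              rw [Function.update_self] at this
              exact eval_det this (eval_step hR hmodel hstep (hev1 j))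
            · have := hev2 j
              rw [Function.update_of_ne hj] at this
              exact eval_det this (hev1 j)
          subst has
          have hqs : qs2 = Function.update qs1 i (qs2 i) := by
            funext j
            by_cases hj : j = i
            · subst hj; rw [Function.update_self]
            · rw [Function.update_of_ne hj]
              have := hlab2 j
              rw [Function.update_of_ne hj] at this
              exact lab_det this (hlab1 j)
          rw [hqs]
          have hli2 := hlab2 i
          rw [Function.update_self] at hli2
          exact @Rw.ctxt (FlabT I) (arLab I) X V (labTRS I R) ⟨⟨f, as2⟩, h1⟩ qs1 i
            (qs2 i) (ih (hev1 i) (hlab1 i) hli2)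

end StepPres
section Measure

/-- Region trees: nodes carry an element of `B` and a list of subtrees. -/
inductive Om (B : Type) : Type
  | node : B → List (Om B) → Om B

variable {B : Type} (prec : B → B → Prop)

/-- The well-founded order on region trees: either the head decreases and all
new subtrees already occur among the old ones, or one subtree decreases. -/
inductive OmLt : Om B → Om B → Prop
  | head {g g' : B} {L L' : List (Om B)} :
      prec g' g → (∀ y ∈ L', y ∈ L) → OmLt (Om.node g' L') (Om.node g L)
  | arg {g : B} {x x' : Om B} {L₁ L₂ : List (Om B)} :
      OmLt x' x → OmLt (Om.node g (L₁ ++ x' :: L₂)) (Om.node g (L₁ ++ x :: L₂))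

/-- One-element replacement order on lists. -/
def LS (L' L : List (Om B)) : Prop :=
  ∃ L₁ x' x L₂, L' = L₁ ++ x' :: L₂ ∧ L = L₁ ++ x :: L₂ ∧ OmLt prec x' x

lemma ls_acc_cons {a : Om B} (ha : Acc (OmLt prec) a) :
    ∀ L : List (Om B), Acc (LS prec) L → Acc (LS prec) (a :: L) := by
  induction ha with
  | intro a _ ih1 =>
    intro L hL
    induction hL with
    | intro L hLa ih2 =>
      constructor
      intro M hM
      obtain ⟨L₁, x', x, L₂, hM', hL', hlt⟩ := hM
      cases L₁ with
      | nil =>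
        simp only [List.nil_append, List.cons.injEq] at hM' hL'
        rw [hM']
        rw [← hL'.1] at hlt
        rw [← hL'.2]
        exact ih1 x' hlt L (Acc.intro L hLa)
      | cons b L₁ =>
        simp only [List.cons_append, List.cons.injEq] at hM' hL'
        rw [hM', ← hL'.1]
        exact ih2 (L₁ ++ x' :: L₂) ⟨L₁, x', x, L₂, rfl, hL'.2, hlt⟩

lemma ls_acc {L : List (Om B)} (h : ∀ x ∈ L, Acc (OmLt prec) x) :
    Acc (LS prec) L := by
  induction L with
  | nil =>
    constructor
    intro M hM
    obtain ⟨L₁, x', x, L₂, _, hL, _⟩ := hM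
    exact absurd hL (by simp)
  | cons a L ih =>
    exact ls_acc_cons prec (h a (by simp)) L (ih (fun x hx => h x (by simp [hx])))

lemma node_acc (hwf : ∀ g : B, Acc (fun g' g => prec g' g) g) :
    ∀ g : B, ∀ L : List (Om B), (∀ x ∈ L, Acc (OmLt prec) x) →
      Acc (OmLt prec) (Om.node g L) := by
  intro g
  induction hwf g with
  | intro g _ ihg =>
    intro L hL
    have hacc : Acc (LS prec) L := ls_acc prec hL
    revert hL
    induction hacc with
    | intro L hLS ihL =>
      intro hL
      constructor
      intro y hy
      cases hy with
      | head hp hsub =>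
        exact ihg _ hp _ (fun x hx => hL x (hsub x hx))
      | @arg _ x x' L₁ L₂ hlt =>
        refine ihL (L₁ ++ x' :: L₂) ⟨L₁, x', x, L₂, rfl, rfl, hlt⟩ ?_
        intro z hz
        rcases List.mem_append.1 hz with hz1 | hz2
        · exact hL z (List.mem_append.2 (Or.inl hz1))
        · rcases List.mem_cons.1 hz2 with hz3 | hz4
          · subst hz3
            exact (hL x (by simp)).inv hlt
          · exact hL z (by simp [hz4])

end Measure
section Interpretation

open Classical

variable {F : Type} {ar : F → ℕ} {X A : Type} [Nonempty A] {I : Interp F ar A}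

lemma incore_ground {a : A} (h : InCore I a) :
    ∃ t : Tm F ar Empty, Eval I Empty.elim t a := by
  induction h with
  | mk as hin hI ih =>
    exact ⟨.app _ (fun i => choose (ih i)),
      Eval.app as (fun i => choose_spec (ih i)) hI⟩

/-- A ground term with value `a`. -/
noncomputable def gnd (hcore : ∀ a : A, InCore I a) (a : A) : Tm F ar Empty :=
  choose (incore_ground (hcore a))

lemma gnd_eval (hcore : ∀ a : A, InCore I a) (a : A) :
    Eval I Empty.elim (gnd hcore a) a :=
  choose_spec (incore_ground (hcore a))

/-- The value of a labelled term, read off from its root label. -/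
noncomputable def val : Tm (FlabT I) (arLab I) X → A
  | .var _ => Classical.arbitrary A
  | .app p _ => (I p.1.1 p.1.2).get p.2

/-- The "flattening" of a labelled term to a defined ground term: incorrectly
labelled arguments are replaced by canonical ground terms realizing the label. -/
noncomputable def Phi (hcore : ∀ a : A, InCore I a) :
    Tm (FlabT I) (arLab I) X → Tm F ar Empty
  | .var _ => gnd hcore (Classical.arbitrary A)
  | .app p ss => .app p.1.1 (fun i =>
      if val (ss i) = p.1.2 i then Phi hcore (ss i) else gnd hcore (p.1.2 i))

lemma phi_eval (hcore : ∀ a : A, InCore I a) :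
    ∀ s : Tm (FlabT I) (arLab I) X, Eval I Empty.elim (Phi hcore s) (val s) := by
  intro s
  induction s with
  | var x => exact gnd_eval hcore _
  | app p ss ih =>
    refine Eval.app p.1.2 (fun i => ?_) (Option.some_get p.2).symm
    by_cases h : val (ss i) = p.1.2 i
    · rw [if_pos h]; exact h ▸ ih i
    · rw [if_neg h]; exact gnd_eval hcore _

/-- Defined ground terms. -/
def Gt (I : Interp F ar A) : Type :=
  {t : Tm F ar Empty // ∃ a : A, Eval I Empty.elim t a}

/-- `Phi` packaged with its definedness proof. -/
noncomputable def Phig (hcore : ∀ a : A, InCore I a)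
    (s : Tm (FlabT I) (arLab I) X) : Gt I :=
  ⟨Phi hcore s, val s, phi_eval hcore s⟩

/-- The fringe: the list of measures of the maximal subterms hanging below
incorrectly labelled positions. -/
noncomputable def fr (hcore : ∀ a : A, InCore I a) :
    Tm (FlabT I) (arLab I) X → List (Om (Gt I))
  | .var _ => []
  | .app p ss => (List.finRange (ar p.1.1)).flatMap (fun i =>
      if val (ss i) = p.1.2 i then fr hcore (ss i)
      else [Om.node (Phig hcore (ss i)) (fr hcore (ss i))])

/-- The region-tree measure of a labelled term. -/
noncomputable def mu (hcore : ∀ a : A, InCore I a)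
    (s : Tm (FlabT I) (arLab I) X) : Om (Gt I) :=
  Om.node (Phig hcore s) (fr hcore s)

end Interpretation
section LabLemmas

open Classical

variable {F : Type} {ar : F → ℕ} {X A : Type} [Nonempty A] {I : Interp F ar A}
variable (hcore : ∀ a : A, InCore I a)
variable (σ : X → Tm (FlabT I) (arLab I) X) (α : X → A)

lemma lab_val {f : F} {us : Fin (ar f) → Tm F ar X}
    {q : Tm (FlabT I) (arLab I) X} {b : A}
    (h : Lab I α (Tm.app f us) q) (hb : Eval I α (Tm.app f us) b) :
    val (subst σ q) = b := by
  cases h with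
  | app as hsome qs hev hlab =>
    cases hb with
    | app cs hcs hI =>
      have has : as = cs := funext fun i => eval_det (hev i) (hcs i)
      subst has
      show (I f as).get hsome = b
      simp [hI]

/-- The canonical substitution of ground terms realizing the assignment. -/
noncomputable def tauS : X → Tm F ar Empty := fun x =>
  if val (σ x) = α x then Phi hcore (σ x) else gnd hcore (α x)

lemma lab_phi {u : Tm F ar X} {q : Tm (FlabT I) (arLab I) X}
    (h : Lab I α u q) {b : A} (hb : Eval I α u b) :
    (if val (subst σ q) = b then Phi hcore (subst σ q) else gnd hcore b) =
      subst (tauS hcore σ α) u := by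
  induction h generalizing b with
  | var x =>
    cases hb
    rfl
  | @app f us as hsome qs hev hlab ih =>
    cases hb with
    | app cs hcs hI =>
      have has : as = cs := funext fun i => eval_det (hev i) (hcs i)
      subst has
      have hval : val (subst σ (Tm.app ⟨⟨f, as⟩, hsome⟩ qs)) = b := by
        show (I f as).get hsome = b
        simp [hI]
      rw [if_pos hval]
      show Tm.app f _ = Tm.app f _
      congr 1
      funext i
      exact ih i (hev i)

/-- Fringe contribution of a variable `x`. -/
noncomputable def EFr (x : X) (y : Om (Gt I)) : Prop :=
  (val (σ x) = α x ∧ y ∈ fr hcore (σ x)) ∨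
    (¬ val (σ x) = α x ∧ y = mu hcore (σ x))

lemma lab_var_inv {x : X} {q : Tm (FlabT I) (arLab I) X} (h : Lab I α (Tm.var x) q) :
    q = Tm.var x := by cases h; rfl

lemma eval_var_inv {x : X} {b : A} (h : Eval I α (Tm.var x) b) : b = α x := by
  cases h; rfl

lemma lab_fr {u : Tm F ar X} {q : Tm (FlabT I) (arLab I) X}
    (h : Lab I α u q) (hnv : ∀ z : X, u ≠ Tm.var z) :
    ∀ y ∈ fr hcore (subst σ q), ∃ x ∈ Vars u, EFr hcore σ α x y := by
  induction h with
  | var x => exact absurd rfl (hnv x)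
  | @app f us as hsome qs hev hlab ih =>
    intro y hy
    simp only [subst, fr] at hy
    have hy := List.mem_flatMap.1 hy
    obtain ⟨i, -, hyi⟩ := hy
    rcases hui : us i with x | ⟨g, vs⟩
    · have hqi : qs i = Tm.var x := by
        have hl := hlab i
        rw [hui] at hl
        exact lab_var_inv α hl
      have hai : as i = α x := by
        have he := hev i
        rw [hui] at he
        exact eval_var_inv α he
      rw [hqi, hai] at hyi
      simp only [subst] at hyi
      refine ⟨x, mem_vars_app.2 ⟨i, by rw [hui]; exact rfl⟩, ?_⟩
      by_cases hc : val (σ x) = α x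
      · simp only [hc, ↓reduceIte] at hyi
        exact Or.inl ⟨hc, hyi⟩
      · simp only [hc, ↓reduceIte] at hyi
        simp at hyi
        exact Or.inr ⟨hc, hyi⟩
    · have hvi : val (subst σ (qs i)) = as i := by
        have hl := hlab i
        have he := hev i
        rw [hui] at hl he
        exact lab_val σ α hl he
      rw [if_pos hvi] at hyi
      obtain ⟨x, hx, hE⟩ := ih i (by rw [hui]; intro z h; cases h) y hyi
      exact ⟨x, mem_vars_app.2 ⟨i, hx⟩, hE⟩

lemma lab_fr_mem {u : Tm F ar X} {q : Tm (FlabT I) (arLab I) X}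
    (h : Lab I α u q) (hnv : ∀ z : X, u ≠ Tm.var z) :
    ∀ x ∈ Vars u, ∀ y, EFr hcore σ α x y → y ∈ fr hcore (subst σ q) := by
  induction h with
  | var x => exact absurd rfl (hnv x)
  | @app f us as hsome qs hev hlab ih =>
    intro x hx y hE
    obtain ⟨i, hxi⟩ := mem_vars_app.1 hx
    simp only [subst, fr]
    refine List.mem_flatMap.2 ?_
    refine ⟨i, List.mem_finRange i, ?_⟩
    rcases hui : us i with z | ⟨g, vs⟩
    · rw [hui] at hxi
      have hxz : x = z := by simpa [Vars] using hxi
      subst hxz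
      have hqi : qs i = Tm.var x := by
        have hl := hlab i
        rw [hui] at hl
        exact lab_var_inv α hl
      have hai : as i = α x := by
        have he := hev i
        rw [hui] at he
        exact eval_var_inv α he
      rw [hqi, hai]
      simp only [subst]
      rcases hE with ⟨hc, hy⟩ | ⟨hc, hy⟩
      · simp only [hc, ↓reduceIte]
        exact hy
      · simp only [hc, ↓reduceIte]
        simp [hy, mu]
    · have hvi : val (subst σ (qs i)) = as i := by
        have hl := hlab i
        have he := hev i
        rw [hui] at hl he
        exact lab_val σ α hl he
      rw [if_pos hvi]
      exact ih i (by rw [hui]; intro z h; cases h) x hxi y hE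

end LabLemmas
section MainStep

open Classical

variable {F : Type} {ar : F → ℕ} {X A : Type} [Nonempty A] {I : Interp F ar A}
variable (hcore : ∀ a : A, InCore I a)

/-- The precedence: inverted rewriting on defined ground terms. -/
def precR (R : Set (Tm F ar X × Tm F ar X)) (I : Interp F ar A) :
    Gt I → Gt I → Prop :=
  fun g' g => Rw R g.1 g'.1

variable {R : Set (Tm F ar X × Tm F ar X)}

/-- The key lemma: each labelled rewrite step preserves the value and
decreases the measure. -/
lemma main_step (hR : IsTRS R) (hnc : ∀ p ∈ R, ∀ x : X, p.2 ≠ Tm.var x)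
    (hmodel : PartialModel I (fun a b => a = b) R)
    {s t : Tm (FlabT I) (arLab I) X} (h : Rw (labTRS I R) s t) :
    val t = val s ∧
      ((Rw R (Phi hcore s) (Phi hcore t) ∧ ∀ y ∈ fr hcore t, y ∈ fr hcore s) ∨
       (Phi hcore t = Phi hcore s ∧ ∃ L₁ x' x L₂,
          fr hcore t = L₁ ++ x' :: L₂ ∧ fr hcore s = L₁ ++ x :: L₂ ∧
          OmLt (precR R I) x' x)) := by
  induction h with
  | @rule q₁ q₂ hm σ =>
    obtain ⟨p, hmem, α, ⟨a, hel⟩, hq1, hq2⟩ := hm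
    obtain ⟨l, r⟩ := p
    simp only at hq1 hq2 hel
    have hlnv : ∀ z : X, l ≠ Tm.var z := (hR _ hmem).1
    have hrnv : ∀ z : X, r ≠ Tm.var z := hnc _ hmem
    obtain ⟨b, hbr, hab⟩ := hmodel _ hmem α a hel
    rw [← hab] at hbr
    clear hab
    have hv1 : val (subst σ q₁) = a := by
      rcases l with z | ⟨f, us⟩
      · exact absurd rfl (hlnv z)
      · exact lab_val σ α hq1 hel
    have hv2 : val (subst σ q₂) = a := by
      rcases r with z | ⟨f, us⟩
      · exact absurd rfl (hrnv z)
      · exact lab_val σ α hq2 hbr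
    refine ⟨hv2.trans hv1.symm, Or.inl ⟨?_, ?_⟩⟩
    · have hp1 := lab_phi hcore σ α hq1 hel
      rw [if_pos hv1] at hp1
      have hp2 := lab_phi hcore σ α hq2 hbr
      rw [if_pos hv2] at hp2
      rw [hp1, hp2]
      exact Rw.rule hmem _
    · intro y hy
      obtain ⟨x, hxr, hE⟩ := lab_fr hcore σ α hq2 hrnv y hy
      exact lab_fr_mem hcore σ α hq1 hlnv x ((hR _ hmem).2 hxr) y hE
  | @ctxt p ss i t' hst ih =>
    obtain ⟨⟨f, as⟩, hsome⟩ := p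
    obtain ⟨hvt', hdisj⟩ := ih
    refine ⟨rfl, ?_⟩
    obtain ⟨P, S, hfs, hupd⟩ := flatMap_decomp (C := Om (Gt I)) i (fun j =>
      if val (ss j) = as j then fr hcore (ss j)
      else [Om.node (Phig hcore (ss j)) (fr hcore (ss j))])
    have hfrs : fr hcore (Tm.app ⟨⟨f, as⟩, hsome⟩ ss) =
        P ++ (if val (ss i) = as i then fr hcore (ss i)
          else [Om.node (Phig hcore (ss i)) (fr hcore (ss i))]) ++ S := hfs
    have hfrt : fr hcore (Tm.app ⟨⟨f, as⟩, hsome⟩ (Function.update ss i t')) =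
        P ++ (if val t' = as i then fr hcore t'
          else [Om.node (Phig hcore t') (fr hcore t')]) ++ S := by
      have hagree : ∀ j, j ≠ i →
          (fun j => if val (Function.update ss i t' j) = as j
            then fr hcore (Function.update ss i t' j)
            else [Om.node (Phig hcore (Function.update ss i t' j))
              (fr hcore (Function.update ss i t' j))]) j =
          (fun j => if val (ss j) = as j then fr hcore (ss j)
            else [Om.node (Phig hcore (ss j)) (fr hcore (ss j))]) j := by
        intro j hj
        simp only [Function.update_of_ne hj]
      have := hupd _ hagree
      simp only [Function.update_self] at this
      exact this
    have hcs : Phi hcore (Tm.app ⟨⟨f, as⟩, hsome⟩ ss) =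
        Tm.app f (fun j => if val (ss j) = as j then Phi hcore (ss j)
          else gnd hcore (as j)) := rfl
    have hct : Phi hcore (Tm.app ⟨⟨f, as⟩, hsome⟩ (Function.update ss i t')) =
        Tm.app f (Function.update
          (fun j => if val (ss j) = as j then Phi hcore (ss j)
            else gnd hcore (as j)) i
          (if val t' = as i then Phi hcore t' else gnd hcore (as i))) := by
      show Tm.app f _ = Tm.app f _
      congr 1
      funext j
      by_cases hj : j = i
      · subst hj
        exact congrArg (fun u => if val u = as j then Phi hcore u else gnd hcore (as j))
          (Function.update_self j t' ss) |>.trans (Function.update_self j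
            (if val t' = as j then Phi hcore t' else gnd hcore (as j)) (fun j => if val (ss j) = as j then Phi hcore (ss j) else gnd hcore (as j))).symm
      · exact congrArg (fun u => if val u = as j then Phi hcore u else gnd hcore (as j))
          (Function.update_of_ne hj t' ss) |>.trans (Function.update_of_ne hj
            (if val t' = as i then Phi hcore t' else gnd hcore (as i)) (fun j => if val (ss j) = as j then Phi hcore (ss j) else gnd hcore (as j))).symm
    by_cases hc : val (ss i) = as i
    · -- the changed argument is correctly labelled
      have hc' : val t' = as i := hvt'.trans hc
      rcases hdisj with ⟨hrw, hsub⟩ | ⟨hpeq, L₁, x', x, L₂, hT, hS, hlt⟩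
      · left
        constructor
        · rw [hcs, hct, if_pos hc']
          have : Rw R ((fun j => if val (ss j) = as j then Phi hcore (ss j)
              else gnd hcore (as j)) i) (Phi hcore t') := by
            simp only [if_pos hc]
            exact hrw
          exact @Rw.ctxt F ar X Empty R f (fun j => if val (ss j) = as j then Phi hcore (ss j) else gnd hcore (as j)) i (Phi hcore t') this
        · intro y hy
          rw [hfrt, if_pos hc'] at hy
          rw [hfrs, if_pos hc]
          simp only [List.mem_append] at hy ⊢
          rcases hy with (hy | hy) | hy
          · exact Or.inl (Or.inl hy)
          · exact Or.inl (Or.inr (hsub y hy))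
          · exact Or.inr hy
      · right
        constructor
        · rw [hcs, hct, if_pos hc']
          congr 1
          funext j
          by_cases hj : j = i
          · subst hj
            simp only [Function.update_self, if_pos hc, hpeq]
          · simp only [Function.update_of_ne hj]
        · refine ⟨P ++ L₁, x', x, L₂ ++ S, ?_, ?_, hlt⟩
          · rw [hfrt, if_pos hc', hT]
            simp [List.append_assoc]
          · rw [hfrs, if_pos hc, hS]
            simp [List.append_assoc]
    · -- the changed argument is incorrectly labelled
      have hc' : ¬ val t' = as i := fun h => hc (hvt' ▸ h)
      right
      constructor
      · rw [hcs, hct, if_neg hc']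
        congr 1
        funext j
        by_cases hj : j = i
        · subst hj
          simp only [Function.update_self, if_neg hc]
        · simp only [Function.update_of_ne hj]
      · refine ⟨P, Om.node (Phig hcore t') (fr hcore t'),
          Om.node (Phig hcore (ss i)) (fr hcore (ss i)), S, ?_, ?_, ?_⟩
        · rw [hfrt, if_neg hc']
          simp
        · rw [hfrs, if_neg hc]
          simp
        · rcases hdisj with ⟨hrw, hsub⟩ | ⟨hpeq, L₁, x', x, L₂, hT, hS, hlt⟩
          · exact OmLt.head hrw hsub
          · have hgeq : Phig hcore t' = Phig hcore (ss i) := Subtype.ext hpeq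
            rw [hgeq, hT, hS]
            exact OmLt.arg hlt
end MainStep

section Final

open Classical

variable {F : Type} {ar : F → ℕ} {X A : Type} [Nonempty A] {I : Interp F ar A}
variable (hcore : ∀ a : A, InCore I a) {R : Set (Tm F ar X × Tm F ar X)}

lemma fr_acc (hwf : ∀ g : Gt I, Acc (fun g' g => precR R I g' g) g) :
    ∀ s : Tm (FlabT I) (arLab I) X, ∀ y ∈ fr hcore s, Acc (OmLt (precR R I)) y := by
  intro s
  induction s with
  | var x => intro y hy; exact absurd hy (by simp [fr])
  | app p ss ih =>
    intro y hy
    simp only [fr] at hy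
    have hy := List.mem_flatMap.1 hy
    obtain ⟨i, -, hyi⟩ := hy
    by_cases hc : val (ss i) = p.1.2 i
    · rw [if_pos hc] at hyi
      exact ih i y hyi
    · rw [if_neg hc] at hyi
      simp only [List.mem_singleton] at hyi
      rw [hyi]
      exact node_acc (precR R I) hwf _ _ (ih i)

lemma mu_acc (hwf : ∀ g : Gt I, Acc (fun g' g => precR R I g' g) g)
    (s : Tm (FlabT I) (arLab I) X) : Acc (OmLt (precR R I)) (mu hcore s) :=
  node_acc (precR R I) hwf _ _ (fr_acc hcore hwf s)

end Final


open Classical in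
/-- Let `R` be a non-collapsing TRS and `(A, I)` a core
partial model for `R`.  Then `R` is terminating on
`L(A) = {t ground | [[t]] defined}` iff the labelled TRS `lab_A(R)` is
terminating on all terms over the labelled signature. -/
theorem local_termination_iff_labelled_global_termination
    {F X A : Type} {ar : F → ℕ} [Nonempty A]
    (R : Set (Tm F ar X × Tm F ar X)) (hR : IsTRS R)
    (hnc : ∀ p ∈ R, ∀ x : X, p.2 ≠ Tm.var x)
    (I : Interp F ar A)
    (hmodel : PartialModel I (fun a b => a = b) R)
    (hcore : ∀ a : A, InCore I a) :
    SNon (Rw R) {t : Tm F ar Empty | ∃ a : A, Eval I Empty.elim t a} ↔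
      SNon (Rw (labTRS I R))
        (Set.univ : Set (Tm (FlabT I) (arLab I) X)) := by
  constructor
  · intro hSN
    have hwf : ∀ g : Gt I, Acc (fun g' g => precR R I g' g) g := by
      intro g
      by_contra hg
      obtain ⟨f, hf0, hstep⟩ :=
        chain_of_not_acc (s := fun g g' : Gt I => Rw R g.1 g'.1) hg
      exact hSN (f 0).1 (f 0).2 ⟨fun n => (f n).1, rfl, hstep⟩
    intro q0 _ hex
    obtain ⟨qf, hq0, hqs⟩ := hex
    have hdec : ∀ n, OmLt (precR R I) (mu hcore (qf (n+1))) (mu hcore (qf n)) := by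
      intro n
      obtain ⟨-, hd⟩ := main_step hcore hR hnc hmodel (hqs n)
      rcases hd with ⟨hrw, hsub⟩ | ⟨hpeq, L₁, x', x, L₂, hT, hS, hlt⟩
      · exact OmLt.head hrw hsub
      · have hge : Phig hcore (qf (n+1)) = Phig hcore (qf n) := Subtype.ext hpeq
        show OmLt _ (Om.node (Phig hcore (qf (n+1))) (fr hcore (qf (n+1))))
          (Om.node (Phig hcore (qf n)) (fr hcore (qf n)))
        rw [hge, hT, hS]
        exact OmLt.arg hlt
    exact acc_no_chain (mu_acc hcore hwf (qf 0)) (fun n => mu hcore (qf n)) rfl hdec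
  · intro hlab t ht hex
    obtain ⟨f, hf0, hstep⟩ := hex
    obtain ⟨a, ha0⟩ := ht
    have hev : ∀ n, Eval I Empty.elim (f n) a := by
      intro n
      induction n with
      | zero => rw [hf0]; exact ha0
      | succ n ih => exact eval_step hR hmodel (hstep n) ih
    have hevu : ∀ n, Eval I (fun _ : X => Classical.arbitrary A)
        (subst (fun e : Empty => e.elim) (f n)) a :=
      fun n => eval_subst (hev n) (fun x _ => x.elim)
    have hlabex : ∀ n, ∃ q, Lab I (fun _ : X => Classical.arbitrary A)
        (subst (fun e : Empty => e.elim) (f n)) q :=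
      fun n => lab_exists (hevu n)
    have hsteps : ∀ n, Rw (labTRS I R) (choose (hlabex n)) (choose (hlabex (n+1))) :=
      fun n => rw_lift hR hmodel (rw_subst (hstep n) (fun e : Empty => e.elim))
        (hevu n) (choose_spec (hlabex n)) (choose_spec (hlabex (n+1)))
    exact hlab (choose (hlabex 0)) (Set.mem_univ _)
      ⟨fun n => choose (hlabex n), rfl, hsteps⟩

end LocalTerm
end
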